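/- arXiv:1301.2647 — 3 statements merged into one kernel-verified Lean document; each statement's English description precedes it below -/
import Mathlib

section
/- Every formal power series f(q) with integer coefficients and constant term 1 can be written uniquely as an infinite product ∏_{k=1}^∞ (1-q^k)^{i_k} where (i_k) is a sequence of integers (the product converging in the q-adic topology, i.e., modulo q^N it equals the finite product over k < N for every N). -/
open PowerSeries Finset

/-- The power series `1 - q^(k+1)`, as a unit of `ℤ⟦X⟧`. -/
noncomputable def oneSubX (k : ℕ) : (PowerSeries ℤ)ˣ :=
  ((PowerSeries.isUnit_iff_constantCoeff (φ := 1 - X ^ (k + 1))).mpr (by simp)).unit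

/-- `f = ∏_{k=1}^∞ (1 - q^k)^(i k)` in `ℤ⟦X⟧`, interpreted q-adically: modulo `q^N`, `f`
agrees with the finite product of the factors `(1 - q^k)^(i k)` for `1 ≤ k ≤ N`.
Negative exponents are interpreted via inverses in the unit group of `ℤ⟦X⟧`. -/
def HasProdExpansion (f : PowerSeries ℤ) (i : ℕ → ℤ) : Prop :=
  ∀ N : ℕ, trunc N f =
    trunc N ((∏ k ∈ range N, oneSubX k ^ i (k + 1) : (PowerSeries ℤ)ˣ) : PowerSeries ℤ)

lemma oneSubX_val (k : ℕ) :
    ((oneSubX k : (PowerSeries ℤ)ˣ) : PowerSeries ℤ) = 1 - X ^ (k + 1) :=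
  IsUnit.unit_spec _

lemma trunc_eq_iff {a b : PowerSeries ℤ} {N : ℕ} :
    trunc N a = trunc N b ↔ (X : PowerSeries ℤ) ^ N ∣ a - b := by
  rw [PowerSeries.X_pow_dvd_iff]
  constructor
  · intro h m hm
    have := congrArg (fun p => Polynomial.coeff p m) h
    simp only [coeff_trunc, if_pos hm] at this
    simp [this]
  · intro h
    ext m
    rw [coeff_trunc, coeff_trunc]
    split_ifs with hm
    · have := h m hm
      rw [map_sub, sub_eq_zero] at this
      exact this
    · rfl

lemma pow_nat_approx (k n : ℕ) :
    (X : PowerSeries ℤ) ^ (k + 2) ∣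
      (1 - X ^ (k + 1)) ^ n - (1 - (n : PowerSeries ℤ) * X ^ (k + 1)) := by
  induction n with
  | zero => simp
  | succ n ih =>
    obtain ⟨c, hc⟩ := ih
    refine ⟨(n : PowerSeries ℤ) * X ^ k + c * (1 - X ^ (k + 1)), ?_⟩
    push_cast
    linear_combination (1 - (X : PowerSeries ℤ) ^ (k + 1)) * hc

lemma zpow_approx (k : ℕ) (z : ℤ) :
    (X : PowerSeries ℤ) ^ (k + 2) ∣
      ((oneSubX k ^ z : (PowerSeries ℤ)ˣ) : PowerSeries ℤ)
        - (1 - (z : PowerSeries ℤ) * X ^ (k + 1)) := by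
  obtain ⟨n, rfl | rfl⟩ := z.eq_nat_or_neg
  · rw [zpow_natCast, Units.val_pow_eq_pow_val, oneSubX_val]
    push_cast
    exact pow_nat_approx k n
  · obtain ⟨c, hc⟩ := pow_nat_approx k n
    have hu : IsUnit ((oneSubX k ^ (n : ℤ) : (PowerSeries ℤ)ˣ) : PowerSeries ℤ) :=
      Units.isUnit _
    rw [← hu.dvd_mul_right]
    have key : ((oneSubX k ^ (-(n : ℤ)) : (PowerSeries ℤ)ˣ) : PowerSeries ℤ)
        * ((oneSubX k ^ (n : ℤ) : (PowerSeries ℤ)ˣ) : PowerSeries ℤ) = 1 := by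
      rw [← Units.val_mul, ← zpow_add]
      simp
    have hPval : ((oneSubX k ^ (n : ℤ) : (PowerSeries ℤ)ˣ) : PowerSeries ℤ)
        = (1 - X ^ (k + 1)) ^ n := by
      rw [zpow_natCast, Units.val_pow_eq_pow_val, oneSubX_val]
    rw [← hPval] at hc
    refine ⟨(n : PowerSeries ℤ) ^ 2 * X ^ k
      - (1 + (n : PowerSeries ℤ) * X ^ (k + 1)) * c, ?_⟩
    push_cast
    linear_combination key - (1 + (n : PowerSeries ℤ) * X ^ (k + 1)) * hc

/-- The auxiliary recursion producing the exponents and partial products. -/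
noncomputable def expUnit (f : PowerSeries ℤ) : ℕ → ℤ × (PowerSeries ℤ)ˣ
  | 0 => (0, 1)
  | N + 1 =>
    (-(coeff (N + 1) (f * ((((expUnit f N).2)⁻¹ : (PowerSeries ℤ)ˣ) : PowerSeries ℤ))),
      (expUnit f N).2 * oneSubX N ^
        (-(coeff (N + 1) (f * ((((expUnit f N).2)⁻¹ : (PowerSeries ℤ)ˣ) : PowerSeries ℤ)))))

lemma expUnit_snd (f : PowerSeries ℤ) (N : ℕ) :
    (expUnit f N).2 = ∏ k ∈ range N, oneSubX k ^ (expUnit f (k + 1)).1 := by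
  induction N with
  | zero => simp [expUnit]
  | succ N ih =>
    rw [prod_range_succ, ← ih]
    rfl

lemma expUnit_approx (f : PowerSeries ℤ) (hf : constantCoeff f = 1) (N : ℕ) :
    (X : PowerSeries ℤ) ^ (N + 1) ∣ f - ((expUnit f N).2 : PowerSeries ℤ) := by
  induction N with
  | zero =>
    rw [pow_one, X_dvd_iff]
    simp [expUnit, hf]
  | succ N ih =>
    set s : (PowerSeries ℤ)ˣ := (expUnit f N).2 with hs
    set g : PowerSeries ℤ := f * ((s⁻¹ : (PowerSeries ℤ)ˣ) : PowerSeries ℤ) with hg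
    set m : ℤ := -(coeff (N + 1) g) with hmdef
    have hgs : g * (s : PowerSeries ℤ) = f := by
      rw [hg, mul_assoc, ← Units.val_mul]
      simp
    have h1 : (X : PowerSeries ℤ) ^ (N + 1) ∣ g - 1 := by
      have h2 := ih.mul_right ((s⁻¹ : (PowerSeries ℤ)ˣ) : PowerSeries ℤ)
      have h3 : (f - (s : PowerSeries ℤ)) * ((s⁻¹ : (PowerSeries ℤ)ˣ) : PowerSeries ℤ)
          = g - 1 := by
        rw [sub_mul, ← hg, ← Units.val_mul]
        simp
      rwa [h3] at h2
    obtain ⟨c, hc⟩ := h1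
    have hm : m = -(constantCoeff c) := by
      have : coeff (N + 1) g = constantCoeff c := by
        have h4 : g = 1 + X ^ (N + 1) * c := by linear_combination hc
        rw [h4, map_add, coeff_one, if_neg (Nat.succ_ne_zero N)]
        have h5 := coeff_X_pow_mul c (N + 1) 0
        rw [zero_add] at h5
        rw [h5, coeff_zero_eq_constantCoeff, zero_add]
      rw [hmdef, this]
    obtain ⟨d, hd⟩ := zpow_approx N m
    have hXe : (X : PowerSeries ℤ) ∣ c + (m : PowerSeries ℤ) := by
      rw [X_dvd_iff, map_add, map_intCast, hm]
      push_cast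
      ring
    obtain ⟨e, he⟩ := hXe
    have hsucc : (expUnit f (N + 1)).2 = s * oneSubX N ^ m := rfl
    rw [hsucc, Units.val_mul]
    refine ⟨(e - d) * (s : PowerSeries ℤ), ?_⟩
    linear_combination (s : PowerSeries ℤ) * hc - (s : PowerSeries ℤ) * hd
      + X ^ (N + 1) * (s : PowerSeries ℤ) * he - hgs

lemma hasProdExpansion_exists (f : PowerSeries ℤ) (hf : constantCoeff f = 1) :
    HasProdExpansion f (fun k => (expUnit f k).1) := by
  intro N
  rw [trunc_eq_iff]
  have h1 : (∏ k ∈ range N, oneSubX k ^ (expUnit f (k + 1)).1 : (PowerSeries ℤ)ˣ)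
      = (expUnit f N).2 := (expUnit_snd f N).symm
  rw [h1]
  exact dvd_trans (pow_dvd_pow X (Nat.le_succ N)) (expUnit_approx f hf N)

lemma hasProdExpansion_unique (f : PowerSeries ℤ) (i j : ℕ → ℤ)
    (hi0 : i 0 = 0) (hj0 : j 0 = 0)
    (hi : HasProdExpansion f i) (hj : HasProdExpansion f j) : i = j := by
  funext k
  induction k using Nat.strong_induction_on with
  | _ k IH =>
    rcases k with _ | n
    · rw [hi0, hj0]
    · -- use N = n + 2
      have hQ : (∏ m ∈ range n, oneSubX m ^ i (m + 1) : (PowerSeries ℤ)ˣ)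
          = ∏ m ∈ range n, oneSubX m ^ j (m + 1) := by
        refine prod_congr rfl fun m hm => ?_
        rw [IH (m + 1) (Nat.succ_lt_succ (mem_range.mp hm))]
      set Q : (PowerSeries ℤ)ˣ := ∏ m ∈ range n, oneSubX m ^ j (m + 1) with hQdef
      have hsplit : ∀ e : ℕ → ℤ,
          (∏ m ∈ range n, oneSubX m ^ e (m + 1) : (PowerSeries ℤ)ˣ)
            = (∏ m ∈ range n, oneSubX m ^ e (m + 1) : (PowerSeries ℤ)ˣ) := fun _ => rfl
      have hin := hi (n + 2)
      have hjn := hj (n + 2)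
      rw [trunc_eq_iff] at hin hjn
      have hdiff : (X : PowerSeries ℤ) ^ (n + 2) ∣
          ((∏ m ∈ range (n + 2), oneSubX m ^ j (m + 1) : (PowerSeries ℤ)ˣ) : PowerSeries ℤ)
          - ((∏ m ∈ range (n + 2), oneSubX m ^ i (m + 1) : (PowerSeries ℤ)ˣ) : PowerSeries ℤ) := by
        have := dvd_sub hin hjn
        have h7 : f - ↑(∏ m ∈ range (n + 2), oneSubX m ^ i (m + 1) : (PowerSeries ℤ)ˣ)
            - (f - ↑(∏ m ∈ range (n + 2), oneSubX m ^ j (m + 1) : (PowerSeries ℤ)ˣ))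
            = ((∏ m ∈ range (n + 2), oneSubX m ^ j (m + 1) : (PowerSeries ℤ)ˣ) : PowerSeries ℤ)
            - ((∏ m ∈ range (n + 2), oneSubX m ^ i (m + 1) : (PowerSeries ℤ)ˣ) : PowerSeries ℤ) := by
          ring
        rwa [h7] at this
      have hsplit_i : (∏ m ∈ range (n + 2), oneSubX m ^ i (m + 1) : (PowerSeries ℤ)ˣ)
          = Q * oneSubX n ^ i (n + 1) * oneSubX (n + 1) ^ i (n + 2) := by
        rw [prod_range_succ, prod_range_succ, hQ]
      have hsplit_j : (∏ m ∈ range (n + 2), oneSubX m ^ j (m + 1) : (PowerSeries ℤ)ˣ)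
          = Q * oneSubX n ^ j (n + 1) * oneSubX (n + 1) ^ j (n + 2) := by
        rw [prod_range_succ, prod_range_succ]
      rw [hsplit_i, hsplit_j] at hdiff
      set a : ℤ := i (n + 1) with hadef
      set b : ℤ := j (n + 1) with hbdef
      set A : PowerSeries ℤ := ((oneSubX n ^ a : (PowerSeries ℤ)ˣ) : PowerSeries ℤ) with hA
      set B : PowerSeries ℤ := ((oneSubX n ^ b : (PowerSeries ℤ)ˣ) : PowerSeries ℤ) with hB
      set Va : PowerSeries ℤ :=
        ((oneSubX (n + 1) ^ i (n + 2) : (PowerSeries ℤ)ˣ) : PowerSeries ℤ) with hVa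
      set Vb : PowerSeries ℤ :=
        ((oneSubX (n + 1) ^ j (n + 2) : (PowerSeries ℤ)ˣ) : PowerSeries ℤ) with hVb
      have hdiff2 : (X : PowerSeries ℤ) ^ (n + 2) ∣
          (Q : PowerSeries ℤ) * (B * Vb - A * Va) := by
        have h8 : ((Q * oneSubX n ^ b * oneSubX (n + 1) ^ j (n + 2)
            : (PowerSeries ℤ)ˣ) : PowerSeries ℤ)
            - ((Q * oneSubX n ^ a * oneSubX (n + 1) ^ i (n + 2)
            : (PowerSeries ℤ)ˣ) : PowerSeries ℤ)
            = (Q : PowerSeries ℤ) * (B * Vb - A * Va) := by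
          simp only [Units.val_mul]
          ring
        rwa [h8] at hdiff
      rw [(Units.isUnit Q).dvd_mul_left] at hdiff2
      -- kill the (n+2)-indexed factors
      have hVfact : ∀ z : ℤ, (X : PowerSeries ℤ) ^ (n + 2) ∣
          ((oneSubX (n + 1) ^ z : (PowerSeries ℤ)ˣ) : PowerSeries ℤ) - 1 := by
        intro z
        obtain ⟨d, hd⟩ := zpow_approx (n + 1) z
        refine ⟨-(z : PowerSeries ℤ) * 1 + X * d, ?_⟩
        linear_combination hd
      have hBA : (X : PowerSeries ℤ) ^ (n + 2) ∣ B - A := by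
        have h9 : B - A = (B * Vb - A * Va) - B * (Vb - 1) + A * (Va - 1) := by ring
        rw [h9]
        exact dvd_add (dvd_sub hdiff2 ((hVfact (j (n + 2))).mul_left B))
          ((hVfact (i (n + 2))).mul_left A)
      obtain ⟨ca, hca⟩ := zpow_approx n a
      obtain ⟨cb, hcb⟩ := zpow_approx n b
      have h10 : (X : PowerSeries ℤ) ^ (n + 2) ∣
          ((a : PowerSeries ℤ) - (b : PowerSeries ℤ)) * X ^ (n + 1) := by
        have h11 : ((a : PowerSeries ℤ) - (b : PowerSeries ℤ)) * X ^ (n + 1)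
            = (B - A) - X ^ (n + 2) * (cb - ca) := by
          linear_combination hca - hcb
        rw [h11]
        exact dvd_sub hBA (Dvd.intro _ rfl)
      rw [X_pow_dvd_iff] at h10
      have h12 := h10 (n + 1) (Nat.lt_succ_self (n + 1))
      have h13 : ((a : PowerSeries ℤ) - (b : PowerSeries ℤ)) = C (a - b) := by
        push_cast [← map_intCast (C (R := ℤ))]
        simp
      rw [h13, coeff_C_mul, coeff_X_pow, if_pos rfl, mul_one] at h12
      have : a = b := by linarith [sub_eq_zero.mp h12]
      exact this

/-- Every `f ∈ ℤ⟦q⟧` with constant term `1` can be written uniquely as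
`∏_{k=1}^∞ (1 - q^k)^(i k)` for a sequence of integers `(i k)_{k ≥ 1}`
(we normalize the irrelevant value `i 0` to be `0`). -/
theorem unique_product_expansion (f : PowerSeries ℤ) (hf : constantCoeff f = 1) :
    ∃! i : ℕ → ℤ, i 0 = 0 ∧ HasProdExpansion f i := by
  refine ⟨fun k => (expUnit f k).1, ⟨rfl, hasProdExpansion_exists f hf⟩, ?_⟩
  rintro j ⟨hj0, hjexp⟩
  exact hasProdExpansion_unique f j (fun k => (expUnit f k).1) hj0 rfl hjexp
    (hasProdExpansion_exists f hf)
end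

section
/- For the power series 1 - 2q ∈ ℤ[[q]], the exponents i_k in the product expansion 1 - 2q = ∏_{k≥1}(1-q^k)^{i_k} satisfy k·i_k = ∑_{d | k} μ(d) 2^{k/d}; in particular i_1 = 2, i_2 = 1, i_3 = 2, i_6 = 9, and i_18 = 14532. -/
open PowerSeries Finset

namespace CharSeqAux

/-! ### The logarithmic derivative of a unit power series -/

noncomputable def L (u : (PowerSeries ℤ)ˣ) : PowerSeries ℤ := (↑u⁻¹ : ℤ⟦X⟧) * d⁄dX ℤ ↑u

lemma L_one : L 1 = 0 := by simp [L]

lemma L_mul (u v : (ℤ⟦X⟧)ˣ) : L (u * v) = L u + L v := by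
  have hu : (↑u⁻¹ : ℤ⟦X⟧) * ↑u = 1 := u.inv_mul
  have hv : (↑v⁻¹ : ℤ⟦X⟧) * ↑v = 1 := v.inv_mul
  simp only [L, Units.val_mul, mul_inv_rev, Derivation.leibniz, smul_eq_mul]
  linear_combination ((↑v⁻¹ : ℤ⟦X⟧) * d⁄dX ℤ ↑v) * hu + ((↑u⁻¹ : ℤ⟦X⟧) * d⁄dX ℤ ↑u) * hv

lemma L_pow (u : (ℤ⟦X⟧)ˣ) (n : ℕ) : L (u ^ n) = n • L u := by
  induction n with
  | zero => simpa using L_one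
  | succ m ih => rw [pow_succ, L_mul, ih, succ_nsmul]

lemma L_inv (u : (ℤ⟦X⟧)ˣ) : L u⁻¹ = -L u := by
  have h := L_mul u u⁻¹
  rw [mul_inv_cancel, L_one] at h
  exact (neg_eq_of_add_eq_zero_right h.symm).symm

lemma L_zpow (u : (ℤ⟦X⟧)ˣ) (z : ℤ) : L (u ^ z) = z • L u := by
  cases z with
  | ofNat n => rw [Int.ofNat_eq_coe, zpow_natCast, L_pow, natCast_zsmul]
  | negSucc n => rw [zpow_negSucc, L_inv, L_pow, Int.negSucc_eq, ← Nat.cast_succ, neg_smul, natCast_zsmul]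

lemma L_prod (s : Finset ℕ) (g : ℕ → (ℤ⟦X⟧)ˣ) : L (∏ k ∈ s, g k) = ∑ k ∈ s, L (g k) := by
  induction s using Finset.cons_induction with
  | empty => simpa using L_one
  | cons a s ha ih => rw [prod_cons, sum_cons, L_mul, ih]

/-! ### Explicit inverses -/

noncomputable def S (k : ℕ) : ℤ⟦X⟧ := mk fun n => if (k+1) ∣ n then 1 else 0

lemma dvd_sub_iff {k n : ℕ} (h : k + 1 ≤ n) : (k+1) ∣ n ↔ (k+1) ∣ (n - (k+1)) := by
  constructor
  · intro hd; exact Nat.dvd_sub hd dvd_rfl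
  · intro hd
    have h2 : n = (n - (k+1)) + (k+1) := by omega
    rw [h2]; exact dvd_add hd dvd_rfl

lemma oneSubX_mul_S (k : ℕ) : (1 - X ^ (k+1) : ℤ⟦X⟧) * S k = 1 := by
  ext n
  rw [sub_mul, one_mul, map_sub, coeff_X_pow_mul', coeff_one]
  simp only [S, coeff_mk]
  rcases eq_or_ne n 0 with rfl|hn
  · simp
  · rw [if_neg hn]
    rcases Nat.lt_or_ge n (k+1) with h|h
    · rw [if_neg (fun hd => by have := Nat.le_of_dvd (Nat.pos_of_ne_zero hn) hd; omega),
        if_neg (by omega), sub_zero]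
    · rw [if_pos h, if_congr (dvd_sub_iff h) rfl rfl, sub_self]

noncomputable def G : ℤ⟦X⟧ := mk fun n => 2 ^ n

lemma oneSubTwoX_mul_G : (1 - 2 * X : ℤ⟦X⟧) * G = 1 := by
  ext n
  have h2 : (2 * X * G : ℤ⟦X⟧) = 2 * (X * G) := by ring
  rw [sub_mul, one_mul, map_sub, coeff_one, h2]
  have h3 : (coeff n) (2 * (X * G)) = 2 * (coeff n) (X * G) := by
    rw [show (2 : ℤ⟦X⟧) = C 2 from (map_ofNat (C (R := ℤ)) 2).symm, coeff_C_mul]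
  rw [h3]
  cases n with
  | zero => simp [G]
  | succ m =>
    rw [coeff_succ_X_mul]
    simp [G, pow_succ]
    ring

lemma units_inv_val {u : (ℤ⟦X⟧)ˣ} {g : ℤ⟦X⟧} (h : (↑u : ℤ⟦X⟧) * g = 1) :
    ((↑u⁻¹ : ℤ⟦X⟧)) = g := by
  calc (↑u⁻¹ : ℤ⟦X⟧) = ↑u⁻¹ * ((↑u : ℤ⟦X⟧) * g) := by rw [h, mul_one]
  _ = g := by rw [← mul_assoc, u.inv_mul, one_mul]

lemma oneSubX_val (k : ℕ) : ((oneSubX k : ℤ⟦X⟧)) = 1 - X ^ (k+1) := IsUnit.unit_spec _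

lemma oneSubX_inv_val (k : ℕ) : ((↑(oneSubX k)⁻¹ : ℤ⟦X⟧)) = S k :=
  units_inv_val (by rw [oneSubX_val]; exact oneSubX_mul_S k)

/-! ### Coefficient computations -/

lemma derivative_oneSubX (k : ℕ) :
    d⁄dX ℤ (1 - X ^ (k+1) : ℤ⟦X⟧) = -(C ((k:ℤ)+1) * X ^ k) := by
  rw [map_sub, Derivation.leibniz_pow, derivative_X]
  simp only [Nat.add_sub_cancel, smul_eq_mul, mul_one, nsmul_eq_mul, Derivation.map_one_eq_zero]
  have hc : ((k+1:ℕ) : ℤ⟦X⟧) = C ((k:ℤ)+1) := by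
    rw [map_add, map_one, map_natCast]
    push_cast
    ring
  rw [hc]
  ring

lemma X_mul_L_oneSubX (k : ℕ) :
    X * L (oneSubX k) = -(C ((k:ℤ)+1) * (X ^ (k+1) * S k)) := by
  rw [L, oneSubX_inv_val, oneSubX_val, derivative_oneSubX]
  ring

lemma coeff_Xpow_mul_S (k : ℕ) {n : ℕ} (hn : n ≠ 0) :
    coeff n (X ^ (k+1) * S k) = if (k+1) ∣ n then 1 else 0 := by
  rw [mul_comm, coeff_mul_X_pow']
  rcases Nat.lt_or_ge n (k+1) with h|h
  · rw [if_neg (by omega),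
      if_neg (fun hd => by have := Nat.le_of_dvd (Nat.pos_of_ne_zero hn) hd; omega)]
  · rw [if_pos h]
    simp only [S, coeff_mk]
    rw [if_congr (dvd_sub_iff h).symm rfl rfl]

lemma coeff_X_mul_L_oneSubX (k : ℕ) {n : ℕ} (hn : n ≠ 0) :
    coeff n (X * L (oneSubX k)) = if (k+1) ∣ n then -((k:ℤ)+1) else 0 := by
  rw [X_mul_L_oneSubX, map_neg, coeff_C_mul, coeff_Xpow_mul_S k hn]
  split_ifs
  · push_cast; ring
  · ring

/-! ### Congruence lemmas -/

lemma dvd_X_mul_derivative {N : ℕ} {h : ℤ⟦X⟧} (hd : X ^ N ∣ h) :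
    X ^ N ∣ X * d⁄dX ℤ h := by
  rw [X_pow_dvd_iff] at hd ⊢
  intro m hm
  cases m with
  | zero => simp
  | succ p => rw [coeff_succ_X_mul, coeff_derivative, hd (p+1) hm, zero_mul]

lemma key {N : ℕ} {f P : ℤ⟦X⟧} (h : X ^ N ∣ P - f) :
    X ^ N ∣ X * d⁄dX ℤ P * f - X * d⁄dX ℤ f * P := by
  have h2 := dvd_X_mul_derivative h
  have heq : X * d⁄dX ℤ P * f - X * d⁄dX ℤ f * P
      = (X * d⁄dX ℤ (P - f)) * f - (X * d⁄dX ℤ f) * (P - f) := by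
    rw [map_sub]; ring
  rw [heq]
  exact dvd_sub (h2.mul_right _) (h.mul_left _)

lemma key2 {N : ℕ} {u v : (ℤ⟦X⟧)ˣ} (h : X ^ N ∣ ((v : ℤ⟦X⟧) - (u : ℤ⟦X⟧))) :
    X ^ N ∣ X * L v - X * L u := by
  have h3 := key h
  have hu : (↑u⁻¹ : ℤ⟦X⟧) * ↑u = 1 := u.inv_mul
  have hv : (↑v⁻¹ : ℤ⟦X⟧) * ↑v = 1 := v.inv_mul
  have heq : X * L v - X * L u
      = ((↑v⁻¹ * ↑u⁻¹ : ℤ⟦X⟧)) * (X * d⁄dX ℤ (v : ℤ⟦X⟧) * (u : ℤ⟦X⟧)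
          - X * d⁄dX ℤ (u : ℤ⟦X⟧) * (v : ℤ⟦X⟧)) := by
    simp only [L]
    linear_combination (-(X * (↑v⁻¹ : ℤ⟦X⟧) * d⁄dX ℤ (↑v : ℤ⟦X⟧))) * hu
      + (X * (↑u⁻¹ : ℤ⟦X⟧) * d⁄dX ℤ (↑u : ℤ⟦X⟧)) * hv
  rw [heq]
  exact h3.mul_left _

/-! ### The main divisor-sum identity -/

lemma sum_div {i : ℕ → ℤ} (hi : HasProdExpansion (1 - 2*X) i) {n : ℕ} (hn : 0 < n) :
    ∑ d ∈ Nat.divisors n, (d : ℤ) * i d = 2 ^ n := by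
  set N := n + 1 with hN
  set P : (ℤ⟦X⟧)ˣ := ∏ k ∈ range N, oneSubX k ^ i (k+1) with hP
  have huf : IsUnit (1 - 2*X : ℤ⟦X⟧) := IsUnit.of_mul_eq_one _ oneSubTwoX_mul_G
  have hu : (↑huf.unit : ℤ⟦X⟧) = 1 - 2*X := huf.unit_spec
  have hdvd : X ^ N ∣ ((P : ℤ⟦X⟧) - (huf.unit : ℤ⟦X⟧)) := by
    rw [hu, X_pow_dvd_iff]
    intro m hm
    have h := congrArg (fun p => Polynomial.coeff p m) (hi N)
    simp only [coeff_trunc, if_pos hm] at h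
    rw [map_sub, ← h, sub_self]
  have h2 := key2 hdvd
  rw [X_pow_dvd_iff] at h2
  have hcoeff := h2 n (by omega)
  rw [map_sub, sub_eq_zero] at hcoeff
  have hLu : coeff n (X * L huf.unit) = -2^n := by
    have hinv : ((↑(huf.unit)⁻¹ : ℤ⟦X⟧)) = G :=
      units_inv_val (by rw [hu]; exact oneSubTwoX_mul_G)
    have hD : d⁄dX ℤ ((huf.unit : ℤ⟦X⟧)) = -2 := by
      rw [hu, show (1 - 2*X : ℤ⟦X⟧) = 1 - (X + X) by ring, map_sub, map_add, derivative_X,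
        Derivation.map_one_eq_zero]
      ring
    rw [L, hinv, hD]
    obtain ⟨m, rfl⟩ : ∃ m, n = m + 1 := ⟨n - 1, by omega⟩
    have he : (X * (G * -2) : ℤ⟦X⟧) = -(2 * (X * G)) := by ring
    rw [he, map_neg]
    rw [show (2 : ℤ⟦X⟧) = C 2 from (map_ofNat (C (R := ℤ)) 2).symm, coeff_C_mul,
      coeff_succ_X_mul]
    simp [G, pow_succ]
    ring
  have hLP : coeff n (X * L P) =
      ∑ k ∈ range N, i (k+1) * (if (k+1) ∣ n then -((k:ℤ)+1) else 0) := by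
    rw [show L P = ∑ k ∈ range N, i (k+1) • L (oneSubX k) by
      rw [hP, L_prod]
      exact sum_congr rfl fun k _ => L_zpow _ _]
    rw [mul_sum, map_sum]
    refine sum_congr rfl fun k hk => ?_
    rw [mul_smul_comm, map_zsmul, smul_eq_mul,
      coeff_X_mul_L_oneSubX k (by omega : n ≠ 0)]
  rw [hLP, hLu] at hcoeff
  have hT : ∑ k ∈ range N, (if (k+1) ∣ n then ((k:ℤ)+1) * i (k+1) else 0) = 2^n := by
    have hsum : ∑ k ∈ range N, i (k+1) * (if (k+1) ∣ n then -((k:ℤ)+1) else 0)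
        = -∑ k ∈ range N, (if (k+1) ∣ n then ((k:ℤ)+1) * i (k+1) else 0) := by
      rw [← Finset.sum_neg_distrib]
      refine sum_congr rfl fun k _ => ?_
      split_ifs <;> ring
    rw [hsum] at hcoeff
    linarith
  calc ∑ d ∈ Nat.divisors n, (d:ℤ) * i d
      = ∑ d ∈ filter (· ∣ n) (Ico 1 (n+2)), (d:ℤ) * i d := by
        refine sum_congr ?_ fun _ _ => rfl
        ext j
        simp only [Nat.mem_divisors, mem_filter, mem_Ico]
        constructor
        · rintro ⟨hj, -⟩
          have h1 : 0 < j := Nat.pos_of_dvd_of_pos hj hn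
          have h2 : j ≤ n := Nat.le_of_dvd hn hj
          exact ⟨⟨h1, by omega⟩, hj⟩
        · rintro ⟨-, hj⟩; exact ⟨hj, by omega⟩
    _ = ∑ j ∈ Ico 1 (n+2), (if j ∣ n then (j:ℤ) * i j else 0) := sum_filter _ _
    _ = ∑ k ∈ range (n+1), (if (1+k) ∣ n then ((1+k:ℕ):ℤ) * i (1+k) else 0) := by
        rw [sum_Ico_eq_sum_range]
        norm_num
    _ = 2^n := by
        rw [← hT]
        refine sum_congr rfl fun k _ => ?_
        rw [add_comm 1 k]
        split_ifs with h
        · push_cast; ring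
        · rfl

end CharSeqAux

/-- The exponents in the product expansion of `1 - 2q` satisfy the Möbius-sum formula,
and in particular `i 1 = 2`, `i 2 = 1`, `i 3 = 2`, `i 6 = 9`, `i 18 = 14532`. -/
theorem charSeq_one_sub_two_q (i : ℕ → ℤ)
    (hi : HasProdExpansion (1 - 2 * X) i) :
    (∀ k : ℕ, 1 ≤ k → (k : ℤ) * i k =
        ∑ d ∈ Nat.divisors k, (ArithmeticFunction.moebius d : ℤ) * 2 ^ (k / d)) ∧
    i 1 = 2 ∧ i 2 = 1 ∧ i 3 = 2 ∧ i 6 = 9 ∧ i 18 = 14532 := by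
  have hdiv : ∀ n > 0, ∑ d ∈ Nat.divisors n, ((d:ℤ) * i d) = (2:ℤ)^n :=
    fun n hn => CharSeqAux.sum_div hi hn
  have hm := (ArithmeticFunction.sum_eq_iff_sum_mul_moebius_eq
    (f := fun d => (d:ℤ) * i d) (g := fun n => (2:ℤ)^n)).mp hdiv
  have hform : ∀ k : ℕ, 1 ≤ k → (k:ℤ) * i k =
      ∑ d ∈ Nat.divisors k, (ArithmeticFunction.moebius d : ℤ) * 2^(k/d) := by
    intro k hk
    have h := hm k (by omega)
    simp only [Int.cast_id] at h
    rw [Nat.sum_divisorsAntidiagonal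
      (f := fun d e => (ArithmeticFunction.moebius d : ℤ) * 2^e)] at h
    exact h.symm
  have mu1 : (ArithmeticFunction.moebius 1 : ℤ) = 1 := ArithmeticFunction.moebius_apply_one
  have mu2 : (ArithmeticFunction.moebius 2 : ℤ) = -1 :=
    ArithmeticFunction.moebius_apply_prime Nat.prime_two
  have mu3 : (ArithmeticFunction.moebius 3 : ℤ) = -1 :=
    ArithmeticFunction.moebius_apply_prime Nat.prime_three
  have sqf6 : Squarefree 6 := by
    rw [Nat.squarefree_iff_nodup_primeFactorsList (by norm_num)]
    norm_num [Nat.primeFactorsList]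
  have mu6 : (ArithmeticFunction.moebius 6 : ℤ) = 1 := by
    rw [ArithmeticFunction.moebius_apply_of_squarefree sqf6,
      show ArithmeticFunction.cardFactors 6 = 2 by
        rw [ArithmeticFunction.cardFactors_apply]; norm_num [Nat.primeFactorsList]]
    norm_num
  have mu9 : (ArithmeticFunction.moebius 9 : ℤ) = 0 :=
    ArithmeticFunction.moebius_eq_zero_of_not_squarefree (by
      rw [Nat.squarefree_iff_nodup_primeFactorsList (by norm_num)]
      norm_num [Nat.primeFactorsList])
  have mu18 : (ArithmeticFunction.moebius 18 : ℤ) = 0 :=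
    ArithmeticFunction.moebius_eq_zero_of_not_squarefree (by
      rw [Nat.squarefree_iff_nodup_primeFactorsList (by norm_num)]
      norm_num [Nat.primeFactorsList])
  refine ⟨hform, ?_, ?_, ?_, ?_, ?_⟩
  · have h := hform 1 le_rfl
    rw [Nat.divisors_one, Finset.sum_singleton, mu1] at h
    norm_num at h
    omega
  · have h := hform 2 (by norm_num)
    rw [show Nat.divisors 2 = {1, 2} by decide] at h
    rw [Finset.sum_insert (by decide), Finset.sum_singleton, mu1, mu2] at h
    norm_num at h
    omega
  · have h := hform 3 (by norm_num)
    rw [show Nat.divisors 3 = {1, 3} by decide] at h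
    rw [Finset.sum_insert (by decide), Finset.sum_singleton, mu1, mu3] at h
    norm_num at h
    omega
  · have h := hform 6 (by norm_num)
    rw [show Nat.divisors 6 = {1, 2, 3, 6} by decide] at h
    rw [Finset.sum_insert (by decide), Finset.sum_insert (by decide),
      Finset.sum_insert (by decide), Finset.sum_singleton, mu1, mu2, mu3, mu6] at h
    norm_num at h
    omega
  · have h := hform 18 (by norm_num)
    rw [show Nat.divisors 18 = {1, 2, 3, 6, 9, 18} by decide] at h
    rw [Finset.sum_insert (by decide), Finset.sum_insert (by decide),
      Finset.sum_insert (by decide), Finset.sum_insert (by decide),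
      Finset.sum_insert (by decide), Finset.sum_singleton,
      mu1, mu2, mu3, mu6, mu9, mu18] at h
    norm_num at h
    omega
end

section
/- In ℚ[[q]], the identity (1+q²)/(1-(n-1)q²) = (1-q⁴)/(1-q²)^n · ∏_{k=2}^∞ (1-q^{2k})^{-ℓ_{n-1}(k)} holds, where ℓ_{n-1}(k) is the necklace number (1/k)∑_{d|k} μ(d)(n-1)^{k/d}. -/
open PowerSeries Finset

/-- The power series `1 - q^(m+1)`, as a unit of `ℚ⟦X⟧`. -/
noncomputable def uQ (m : ℕ) : (PowerSeries ℚ)ˣ :=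
  ((PowerSeries.isUnit_iff_constantCoeff (φ := 1 - X ^ (m + 1))).mpr (by simp)).unit

/-- A power series with constant term `1`, as a unit of `ℚ⟦X⟧`. -/
noncomputable def psUnit (f : PowerSeries ℚ) (h : constantCoeff f = 1) :
    (PowerSeries ℚ)ˣ :=
  (PowerSeries.isUnit_iff_constantCoeff.mpr (by rw [h]; exact isUnit_one)).unit

/-- The necklace (Witt) number `ℓ_n(k) = (1/k) ∑_{d ∣ k} μ(d) n^(k/d)` (exact division). -/
def necklace (n k : ℕ) : ℤ :=
  (∑ d ∈ Nat.divisors k, (ArithmeticFunction.moebius d : ℤ) * (n : ℤ) ^ (k / d)) / k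

noncomputable def lder (u : (PowerSeries ℚ)ˣ) : PowerSeries ℚ :=
  PowerSeries.derivativeFun (u : PowerSeries ℚ) * ((u⁻¹ : (PowerSeries ℚ)ˣ) : PowerSeries ℚ)

/-- numerator -/
def wsum (m k : ℕ) : ℤ :=
  ∑ d ∈ Nat.divisors k, (ArithmeticFunction.moebius d : ℤ) * (m : ℤ) ^ (k / d)

lemma fermat_int (m : ℕ) {p : ℕ} (hp : p.Prime) : (p : ℤ) ∣ (m : ℤ) ^ p - m := by
  haveI := Fact.mk hp
  have : (((m : ℤ) ^ p - m : ℤ) : ZMod p) = 0 := by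
    push_cast
    rw [ZMod.pow_card]
    ring
  exact (ZMod.intCast_zmod_eq_zero_iff_dvd _ _).mp this

lemma pow_dvd_pow_sub_pow (m : ℕ) {p : ℕ} (hp : p.Prime) (a t : ℕ) (ha : 1 ≤ a) :
    (p : ℤ) ^ a ∣ (m : ℤ) ^ (p ^ a * t) - (m : ℤ) ^ (p ^ (a - 1) * t) := by
  obtain ⟨b, rfl⟩ : ∃ b, a = b + 1 := ⟨a - 1, (Nat.succ_pred_eq_of_pos ha).symm⟩
  simp only [Nat.add_sub_cancel]
  have h1 : (p : ℤ) ^ (b + 1) ∣ ((m : ℤ) ^ p) ^ (p ^ b) - (m : ℤ) ^ (p ^ b) :=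
    dvd_sub_pow_of_dvd_sub (fermat_int m hp) b
  have h2 : ((m : ℤ) ^ p) ^ (p ^ b) = (m : ℤ) ^ (p ^ (b + 1)) := by
    rw [← pow_mul, pow_succ, mul_comm]
  rw [h2] at h1
  calc (p : ℤ) ^ (b + 1) ∣ (m : ℤ) ^ (p ^ (b + 1)) - (m : ℤ) ^ (p ^ b) := h1
    _ ∣ ((m : ℤ) ^ (p ^ (b + 1))) ^ t - ((m : ℤ) ^ (p ^ b)) ^ t := sub_dvd_pow_sub_pow _ _ t
    _ = (m : ℤ) ^ (p ^ (b + 1) * t) - (m : ℤ) ^ (p ^ b * t) := by rw [← pow_mul, ← pow_mul]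

lemma primepow_dvd_wsum (m : ℕ) {p k : ℕ} (hp : p.Prime) (hk : k ≠ 0) (hpk : p ∣ k) :
    (p : ℤ) ^ (k.factorization p) ∣ wsum m k := by
  set a := k.factorization p with hadef
  have ha : 1 ≤ a := hp.factorization_pos_of_dvd hk hpk
  have hpa : p ^ a ∣ k := Nat.ordProj_dvd k p
  -- split divisors
  rw [wsum, ← Finset.sum_filter_add_sum_filter_not k.divisors (fun d => p ∣ d)]
  -- second sum: divisors not divisible by p
  -- first sum: reduce to those exactly divisible by p
  have hsub : (k.divisors.filter fun d => p ∣ d ∧ ¬ p ∣ d / p) ⊆ (k.divisors.filter fun d => p ∣ d) := by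
    intro d hd
    simp only [Finset.mem_filter] at hd ⊢
    exact ⟨hd.1, hd.2.1⟩
  have h1 : ∑ d ∈ k.divisors.filter (fun d => p ∣ d), (ArithmeticFunction.moebius d : ℤ) * (m : ℤ) ^ (k / d)
      = ∑ d ∈ k.divisors.filter (fun d => p ∣ d ∧ ¬ p ∣ d / p), (ArithmeticFunction.moebius d : ℤ) * (m : ℤ) ^ (k / d) := by
    rw [eq_comm]
    apply Finset.sum_subset hsub
    intro d hd hnd
    simp only [Finset.mem_filter] at hd hnd
    have hpd : p ∣ d := hd.2
    have h2 : p ∣ d / p := by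
      by_contra hc
      exact hnd ⟨hd.1, hd.2, hc⟩
    have : ¬ Squarefree d := by
      intro hsq
      have : p * p ∣ d := by
        obtain ⟨c, hc⟩ := hpd
        obtain ⟨e, he⟩ := h2
        subst hc
        rw [Nat.mul_div_cancel_left _ hp.pos] at he
        subst he
        ring_nf
        exact Dvd.intro e (by ring)
      exact hp.not_isUnit (hsq p this)
    rw [ArithmeticFunction.moebius_eq_zero_of_not_squarefree this]
    simp
  rw [h1]
  -- reindex first sum by e = d / p
  have h2 : ∑ d ∈ k.divisors.filter (fun d => p ∣ d ∧ ¬ p ∣ d / p), (ArithmeticFunction.moebius d : ℤ) * (m : ℤ) ^ (k / d)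
      = ∑ e ∈ k.divisors.filter (fun e => ¬ p ∣ e), (ArithmeticFunction.moebius (p * e) : ℤ) * (m : ℤ) ^ (k / (p * e)) := by
    apply Finset.sum_nbij' (fun d => d / p) (fun e => p * e)
    · intro d hd
      simp only [Finset.mem_filter, Nat.mem_divisors] at hd ⊢
      obtain ⟨⟨hdk, _⟩, hpd, hnd⟩ := hd
      exact ⟨⟨(Nat.div_dvd_of_dvd hpd).trans hdk, hk⟩, hnd⟩
    · intro e he
      simp only [Finset.mem_filter, Nat.mem_divisors] at he ⊢
      obtain ⟨⟨hek, _⟩, hne⟩ := he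
      have hcop : Nat.Coprime p e := (Nat.Prime.coprime_iff_not_dvd hp).mpr hne
      refine ⟨⟨Nat.Coprime.mul_dvd_of_dvd_of_dvd hcop hpk hek, hk⟩, ⟨Dvd.intro e rfl, ?_⟩⟩
      rw [Nat.mul_div_cancel_left _ hp.pos]
      exact hne
    · intro d hd
      simp only [Finset.mem_filter] at hd
      exact (Nat.mul_div_cancel' hd.2.1).symm ▸ rfl
    · intro e he
      rw [Nat.mul_div_cancel_left _ hp.pos]
    · intro d hd
      simp only [Finset.mem_filter] at hd
      rw [Nat.mul_div_cancel' hd.2.1]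
  rw [h2, ← Finset.sum_add_distrib]
  apply Finset.dvd_sum
  intro e he
  simp only [Finset.mem_filter, Nat.mem_divisors] at he
  obtain ⟨⟨hek, _⟩, hne⟩ := he
  have hcop : Nat.Coprime p e := (Nat.Prime.coprime_iff_not_dvd hp).mpr hne
  have hmu : (ArithmeticFunction.moebius (p * e) : ℤ) = -(ArithmeticFunction.moebius e : ℤ) := by
    rw [ArithmeticFunction.isMultiplicative_moebius.map_mul_of_coprime hcop,
      ArithmeticFunction.moebius_apply_prime hp]
    ring
  rw [hmu]
  have hterm : (ArithmeticFunction.moebius (p*e) : ℤ) * (m:ℤ)^(k/(p*e)) + (ArithmeticFunction.moebius e : ℤ) * (m:ℤ)^(k/e) = (ArithmeticFunction.moebius e : ℤ) * ((m:ℤ)^(k/e) - (m:ℤ)^(k/(p*e))) := by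
    rw [hmu]; ring
  have : -(ArithmeticFunction.moebius e : ℤ) * (m : ℤ) ^ (k / (p * e)) + (ArithmeticFunction.moebius e : ℤ) * (m : ℤ) ^ (k / e)
      = (ArithmeticFunction.moebius e : ℤ) * ((m:ℤ)^(k/e) - (m:ℤ)^(k/(p*e))) := by ring
  rw [this]
  apply Dvd.dvd.mul_left
  -- k/e = p^a * t, k/(p*e) = p^(a-1) * t
  have hcopa : Nat.Coprime (p ^ a) e := Nat.Coprime.pow_left a hcop
  have hdvd1 : p ^ a * e ∣ k := Nat.Coprime.mul_dvd_of_dvd_of_dvd hcopa hpa hek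
  have hdvd2 : p ^ a ∣ k / e := (Nat.dvd_div_iff_mul_dvd hek).mpr (mul_comm (p^a) e ▸ hdvd1)
  obtain ⟨t, ht⟩ := hdvd2
  have hke : k / e = p ^ a * t := ht
  have hkpe : k / (p * e) = p ^ (a - 1) * t := by
    have : k / (p * e) = k / e / p := by
      rw [Nat.div_div_eq_div_mul, mul_comm]
    rw [this, hke]
    have hpa' : p ^ a = p * p ^ (a - 1) := by
      rw [← pow_succ']
      congr 1
      omega
    rw [hpa', mul_assoc, Nat.mul_div_cancel_left _ hp.pos]
  rw [hke, hkpe]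
  exact pow_dvd_pow_sub_pow m hp a t ha

lemma dvd_wsum (m : ℕ) {k : ℕ} (hk : k ≠ 0) : (k : ℤ) ∣ wsum m k := by
  have hfact := Nat.factorization_prod_pow_eq_self hk
  rw [Finsupp.prod, Nat.support_factorization] at hfact
  have : (k : ℤ) = ∏ p ∈ k.primeFactors, (p : ℤ) ^ (k.factorization p) := by
    conv_lhs => rw [← hfact]
    push_cast
    ring
  rw [this]
  apply Finset.prod_dvd_of_coprime
  · intro p hp q hq hne
    simp only [Finset.mem_coe, Nat.mem_primeFactors] at hp hq
    have : Nat.Coprime (p ^ (k.factorization p)) (q ^ (k.factorization q)) :=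
      Nat.Coprime.pow _ _ ((Nat.coprime_primes hp.1 hq.1).mpr hne)
    have h2 := this.isCoprime
    push_cast at h2
    exact h2
  · intro p hp
    rw [Nat.mem_primeFactors] at hp
    exact primepow_dvd_wsum m hp.1 hk hp.2.1

lemma mul_necklace_eq_wsum (m : ℕ) {k : ℕ} (hk : k ≠ 0) :
    (k : ℤ) * necklace m k = wsum m k :=
  Int.mul_ediv_cancel' (dvd_wsum m hk)

lemma sum_mul_necklace (m : ℕ) {j : ℕ} (hj : 0 < j) :
    ∑ k ∈ Nat.divisors j, (k : ℤ) * necklace m k = (m : ℤ) ^ j := by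
  have := (ArithmeticFunction.sum_eq_iff_sum_mul_moebius_eq
    (f := fun k => (k : ℤ) * necklace m k) (g := fun j => (m : ℤ) ^ j)).mpr ?_ j hj
  · exact this
  · intro n hn
    simp only [Int.cast_id]
    rw [Nat.sum_divisorsAntidiagonal (fun d e => (ArithmeticFunction.moebius d : ℤ) * (m : ℤ) ^ e)]
    rw [mul_necklace_eq_wsum m hn.ne', wsum]
lemma necklace_one (m : ℕ) : necklace m 1 = m := by
  simp [necklace]

lemma lder_one : lder 1 = 0 := by
  simp [lder, derivativeFun_one]

lemma lder_mul (u v : (PowerSeries ℚ)ˣ) : lder (u * v) = lder u + lder v := by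
  unfold lder
  have h1 : ((u * v : (PowerSeries ℚ)ˣ) : PowerSeries ℚ) = (u : PowerSeries ℚ) * v := rfl
  have h2 : (((u * v)⁻¹ : (PowerSeries ℚ)ˣ) : PowerSeries ℚ)
      = ((u⁻¹ : (PowerSeries ℚ)ˣ) : PowerSeries ℚ) * ((v⁻¹ : (PowerSeries ℚ)ˣ) : PowerSeries ℚ) := by
    rw [mul_inv_rev]
    push_cast
    ring
  rw [h1, h2, derivativeFun_mul]
  have hu : (u : PowerSeries ℚ) * ((u⁻¹ : (PowerSeries ℚ)ˣ) : PowerSeries ℚ) = 1 := by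
    rw [← Units.val_mul, mul_inv_cancel, Units.val_one]
  have hv : (v : PowerSeries ℚ) * ((v⁻¹ : (PowerSeries ℚ)ˣ) : PowerSeries ℚ) = 1 := by
    rw [← Units.val_mul, mul_inv_cancel, Units.val_one]
  simp only [smul_eq_mul]
  linear_combination (derivativeFun (v : PowerSeries ℚ) * ((v⁻¹ : (PowerSeries ℚ)ˣ) : PowerSeries ℚ)) * hu
    + (derivativeFun (u : PowerSeries ℚ) * ((u⁻¹ : (PowerSeries ℚ)ˣ) : PowerSeries ℚ)) * hv

lemma lder_inv (u : (PowerSeries ℚ)ˣ) : lder u⁻¹ = -lder u := by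
  have := lder_mul u u⁻¹
  rw [mul_inv_cancel, lder_one] at this
  linear_combination -this

lemma lder_pow (u : (PowerSeries ℚ)ˣ) (j : ℕ) : lder (u ^ j) = (j : ℤ) • lder u := by
  induction j with
  | zero => simp [lder_one]
  | succ i ih =>
    rw [pow_succ, lder_mul, ih]
    push_cast
    rw [add_smul, one_smul]

lemma lder_zpow (u : (PowerSeries ℚ)ˣ) (z : ℤ) : lder (u ^ z) = z • lder u := by
  cases z with
  | ofNat j => rw [Int.ofNat_eq_coe, zpow_natCast, lder_pow]
  | negSucc j =>
    rw [zpow_negSucc, lder_inv, lder_pow]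
    rw [Int.negSucc_eq, ← neg_smul]
    norm_num

lemma lder_prod {α : Type} (s : Finset α) (f : α → (PowerSeries ℚ)ˣ) :
    lder (∏ k ∈ s, f k) = ∑ k ∈ s, lder (f k) := by
  classical
  induction s using Finset.induction_on with
  | empty => simp [lder_one]
  | insert _ _ h ih =>
    rw [Finset.prod_insert h, lder_mul, ih, Finset.sum_insert h]

noncomputable def geomB (c : ℚ) (s : ℕ) : PowerSeries ℚ :=
  PowerSeries.mk fun i => if s ∣ i then c ^ (i / s) else 0

lemma geomB_mul_eq_one (c : ℚ) {s : ℕ} (hs : s ≠ 0) :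
    (1 - C c * X ^ s) * geomB c s = 1 := by
  ext j
  rw [sub_mul, one_mul, map_sub]
  rw [mul_assoc, coeff_C_mul, coeff_X_pow_mul', geomB, coeff_mk]
  rcases Nat.eq_zero_or_pos j with hj | hj
  · subst hj
    rw [if_pos (dvd_zero s), if_neg (by omega), Nat.zero_div, pow_zero]
    simp
  · rw [PowerSeries.coeff_one, if_neg hj.ne']
    by_cases hd : s ∣ j
    · have hsj : s ≤ j := Nat.le_of_dvd hj hd
      rw [if_pos hd, if_pos hsj, coeff_mk, if_pos ((Nat.dvd_sub hd dvd_rfl))]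
      have h1 : (j - s) / s = j / s - 1 := by
        obtain ⟨t, rfl⟩ := hd
        have ht : 1 ≤ t := by
          rcases Nat.eq_zero_or_pos t with h | h
          · subst h; simp at hj
          · exact h
        rw [Nat.mul_div_cancel_left _ (Nat.pos_of_ne_zero hs)]
        have : s * t - s = s * (t - 1) := by
          rw [Nat.mul_sub, mul_one]
        rw [this, Nat.mul_div_cancel_left _ (Nat.pos_of_ne_zero hs)]
      rw [h1]
      have h2 : 1 ≤ j / s := Nat.one_le_div_iff (Nat.pos_of_ne_zero hs) |>.mpr hsj
      rw [← pow_succ']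
      have : j / s - 1 + 1 = j / s := by omega
      rw [this, sub_self]
    · rw [if_neg hd]
      by_cases hsj : s ≤ j
      · rw [if_pos hsj, coeff_mk, if_neg, mul_zero, sub_zero]
        intro hc
        exact hd (by
          have := Nat.dvd_add hc (dvd_refl s)
          rwa [Nat.sub_add_cancel hsj] at this)
      · rw [if_neg hsj, mul_zero, sub_zero]

lemma derivativeFun_one_sub (c : ℚ) {s : ℕ} (hs : s ≠ 0) :
    PowerSeries.derivativeFun (1 - C c * X ^ s) = C (-(s : ℚ) * c) * X ^ (s - 1) := by
  ext r
  rw [show ∀ f : PowerSeries ℚ, derivativeFun f = derivative ℚ f from fun _ => rfl, coeff_derivative, map_sub, coeff_C_mul]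
  rw [coeff_X_pow, coeff_C_mul, coeff_X_pow, PowerSeries.coeff_one, if_neg (by omega)]
  by_cases h : r + 1 = s
  · rw [if_pos h, if_pos (by omega)]
    push_cast [← h]
    ring
  · rw [if_neg h, if_neg (by omega)]
    ring

lemma val_inv_of_mul_eq_one (u : (PowerSeries ℚ)ˣ) (B : PowerSeries ℚ)
    (h : (u : PowerSeries ℚ) * B = 1) : ((u⁻¹ : (PowerSeries ℚ)ˣ) : PowerSeries ℚ) = B := by
  calc ((u⁻¹ : (PowerSeries ℚ)ˣ) : PowerSeries ℚ)
      = ((u⁻¹ : (PowerSeries ℚ)ˣ) : PowerSeries ℚ) * ((u : PowerSeries ℚ) * B) := by rw [h, mul_one]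
    _ = (((u⁻¹ * u : (PowerSeries ℚ)ˣ)) : PowerSeries ℚ) * B := by rw [Units.val_mul]; ring
    _ = B := by rw [inv_mul_cancel, Units.val_one, one_mul]

lemma coeff_lder_one_sub (c : ℚ) {s : ℕ} (hs : s ≠ 0) (u : (PowerSeries ℚ)ˣ)
    (hu : (u : PowerSeries ℚ) = 1 - C c * X ^ s) (r : ℕ) :
    PowerSeries.coeff r (lder u) =
      if s ∣ (r + 1) then -(s : ℚ) * c ^ ((r + 1) / s) else 0 := by
  have hinv : ((u⁻¹ : (PowerSeries ℚ)ˣ) : PowerSeries ℚ) = geomB c s :=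
    val_inv_of_mul_eq_one u _ (by rw [hu]; exact geomB_mul_eq_one c hs)
  rw [lder, hu, hinv, derivativeFun_one_sub c hs, mul_assoc, coeff_C_mul,
    coeff_X_pow_mul', geomB]
  by_cases hle : s - 1 ≤ r
  · rw [if_pos hle, coeff_mk]
    have hiff : s ∣ (r - (s - 1)) ↔ s ∣ (r + 1) := by
      have : r - (s - 1) = r + 1 - s := by omega
      rw [this]
      constructor
      · intro hc
        have := Nat.dvd_add hc (dvd_refl s)
        rwa [Nat.sub_add_cancel (by omega)] at this
      · intro hc
        exact Nat.dvd_sub hc dvd_rfl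
    by_cases hd : s ∣ (r + 1)
    · rw [if_pos (hiff.mpr hd), if_pos hd]
      have hexp : (r - (s - 1)) / s = (r + 1) / s - 1 := by
        have h1 : r - (s - 1) = r + 1 - s := by omega
        rw [h1]
        obtain ⟨t, ht⟩ := hd
        have ht1 : 1 ≤ t := by
          rcases Nat.eq_zero_or_pos t with h | h
          · rw [h, mul_zero] at ht; omega
          · exact h
        rw [ht, Nat.mul_div_cancel_left _ (Nat.pos_of_ne_zero hs)]
        have : s * t - s = s * (t - 1) := by
          rw [Nat.mul_sub, mul_one]
        rw [this, Nat.mul_div_cancel_left _ (Nat.pos_of_ne_zero hs)]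
      rw [hexp]
      have h2 : 1 ≤ (r + 1) / s := Nat.one_le_div_iff (Nat.pos_of_ne_zero hs) |>.mpr (by
        exact Nat.le_of_dvd (by omega) hd)
      have : c * c ^ ((r+1)/s - 1) = c ^ ((r+1)/s) := by
        rw [← pow_succ']
        congr 1
        omega
      rw [show (-(s:ℚ)*c) * c ^ ((r+1)/s - 1) = -(s:ℚ) * (c * c ^ ((r+1)/s -1)) by ring, this]
    · rw [if_neg (fun hc => hd (hiff.mp hc)), if_neg hd, mul_zero]
  · rw [if_neg hle, mul_zero]
    rw [if_neg (fun hd => hle (by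
      have := Nat.le_of_dvd (by omega) hd
      omega))]

lemma coeff_eq_of_lder_eq_zero (u : (PowerSeries ℚ)ˣ) (N : ℕ)
    (hc : constantCoeff (u : PowerSeries ℚ) = 1)
    (h : ∀ r, r + 1 < N → coeff r (lder u) = 0) :
    ∀ i, i < N → coeff i (u : PowerSeries ℚ) = coeff i (1 : PowerSeries ℚ) := by
  have hud : derivativeFun (u : PowerSeries ℚ) = lder u * (u : PowerSeries ℚ) := by
    rw [lder, mul_assoc, ← Units.val_mul, inv_mul_cancel, Units.val_one, mul_one]
  intro i hi
  cases i with
  | zero => simp [coeff_zero_eq_constantCoeff, hc]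
  | succ r =>
    have h2 : coeff r (derivativeFun (u : PowerSeries ℚ)) = 0 := by
      rw [hud, coeff_mul]
      apply Finset.sum_eq_zero
      intro x hx
      rw [Finset.HasAntidiagonal.mem_antidiagonal] at hx
      rw [h x.1 (by omega), zero_mul]
    rw [show ∀ f : PowerSeries ℚ, derivativeFun f = derivative ℚ f from fun _ => rfl, coeff_derivative] at h2
    have : (r : ℚ) + 1 ≠ 0 := by positivity
    have h3 : coeff (r + 1) (u : PowerSeries ℚ) = 0 := by
      have := mul_eq_zero.mp h2
      rcases this with h | h
      · exact h
      · exfalso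
        have hpos : (0:ℚ) < (r : ℚ) + 1 := by positivity
        rw [h] at hpos
        exact lt_irrefl _ hpos
    rw [h3, PowerSeries.coeff_one, if_neg (by omega)]

lemma psUnit_val (f : PowerSeries ℚ) (h : constantCoeff f = 1) :
    ((psUnit f h : (PowerSeries ℚ)ˣ) : PowerSeries ℚ) = f := rfl

lemma uQ_val (s : ℕ) : ((uQ s : (PowerSeries ℚ)ˣ) : PowerSeries ℚ) = 1 - X ^ (s + 1) := rfl

lemma main_aux (N n : ℕ) (hn : 2 ≤ n) (hN : 1 ≤ N)
    (A G u3 : (PowerSeries ℚ)ˣ) (v : ℕ → (PowerSeries ℚ)ˣ)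
    (hA : (A : PowerSeries ℚ) = 1 + X ^ 2)
    (hG : (G : PowerSeries ℚ) = 1 - C ((n : ℚ) - 1) * X ^ 2)
    (hu3 : (u3 : PowerSeries ℚ) = 1 - X ^ 4)
    (hv : ∀ k, 1 ≤ k → ((v k : PowerSeries ℚ)) = 1 - C 1 * X ^ (2 * k)) :
    trunc N ((A * G⁻¹ : (PowerSeries ℚ)ˣ) : PowerSeries ℚ) =
    trunc N ((u3 * ((v 1)⁻¹) ^ n * ∏ k ∈ Finset.Icc 2 N, v k ^ (-(necklace (n - 1) k)) :
      (PowerSeries ℚ)ˣ) : PowerSeries ℚ) := by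
  have hmz : ((n - 1 : ℕ) : ℤ) = (n : ℤ) - 1 := by
    push_cast [Nat.cast_sub (by omega : 1 ≤ n)]
    ring
  have hmq : ((n - 1 : ℕ) : ℚ) = (n : ℚ) - 1 := by
    push_cast [Nat.cast_sub (by omega : 1 ≤ n)]
    ring
  set L : (PowerSeries ℚ)ˣ := A * G⁻¹ with hLdef
  set R : (PowerSeries ℚ)ˣ :=
    u3 * ((v 1)⁻¹) ^ n * ∏ k ∈ Finset.Icc 2 N, v k ^ (-(necklace (n - 1) k)) with hRdef
  set U : (PowerSeries ℚ)ˣ := L⁻¹ * R with hUdef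
  have hRLU : R = L * U := by rw [hUdef]; group
  -- constant coefficient of U is 1
  have hcU : constantCoeff (U : PowerSeries ℚ) = 1 := by
    set Φ : (PowerSeries ℚ)ˣ →* ℚˣ :=
      Units.map (constantCoeff : PowerSeries ℚ →+* ℚ).toMonoidHom with hPhi
    have hval : ∀ u : (PowerSeries ℚ)ˣ,
        ((Φ u : ℚˣ) : ℚ) = constantCoeff (u : PowerSeries ℚ) := fun u => rfl
    have one_of : ∀ u : (PowerSeries ℚ)ˣ, constantCoeff (u : PowerSeries ℚ) = 1 → Φ u = 1 := by
      intro u hu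
      ext
      rw [hval, hu, Units.val_one]
    have hPA : Φ A = 1 := one_of A (by rw [hA]; simp)
    have hPG : Φ G = 1 := one_of G (by rw [hG]; simp)
    have hP3 : Φ u3 = 1 := one_of u3 (by rw [hu3]; simp)
    have hPU : Φ U = 1 := by
      have hPv : ∀ k ∈ Finset.Icc 2 N, Φ (v k ^ (-(necklace (n - 1) k))) = 1 := by
        intro k hk
        have hk2 : 2 ≤ k := (Finset.mem_Icc.mp hk).1
        rw [map_zpow, one_of (v k) (by rw [hv k (by omega)]; simp; omega), one_zpow]
      have hPv1 : Φ (v 1) = 1 := one_of (v 1) (by rw [hv 1 le_rfl]; simp)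
      rw [hUdef, hLdef, hRdef]
      simp only [map_mul, map_inv, map_pow, map_prod]
      rw [hPA, hPG, hP3, hPv1, Finset.prod_congr rfl hPv]
      simp
    calc constantCoeff (U : PowerSeries ℚ) = ((Φ U : ℚˣ) : ℚ) := (hval U).symm
      _ = 1 := by rw [hPU, Units.val_one]
  -- the factorization u3 = A * v 1
  have hu3f : u3 = A * v 1 := by
    ext
    rw [Units.val_mul, hu3, hA, hv 1 le_rfl, map_one]
    ring
  -- logarithmic derivative of U
  have hldU : lder U = lder G - ∑ k ∈ Finset.Icc 1 N, (necklace (n - 1) k) • lder (v k) := by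
    have e1 : lder U = lder R - lder L := by
      rw [hUdef, lder_mul, lder_inv]; ring
    have e2 : lder L = lder A - lder G := by
      rw [hLdef, lder_mul, lder_inv]; ring
    have e3 : lder R = lder A + lder (v 1) - (n : ℤ) • lder (v 1)
        - ∑ k ∈ Finset.Icc 2 N, (necklace (n - 1) k) • lder (v k) := by
      rw [hRdef, lder_mul, lder_mul, hu3f, lder_mul, lder_pow, lder_inv, lder_prod]
      rw [Finset.sum_congr rfl (fun k _ => lder_zpow (v k) _)]
      rw [Finset.sum_congr rfl (fun k _ => neg_smul (necklace (n - 1) k) (lder (v k)))]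
      rw [Finset.sum_neg_distrib, smul_neg]
      abel
    have e4 : ∑ k ∈ Finset.Icc 1 N, (necklace (n - 1) k) • lder (v k)
        = (necklace (n - 1) 1) • lder (v 1)
          + ∑ k ∈ Finset.Icc 2 N, (necklace (n - 1) k) • lder (v k) := by
      have hins : Finset.Icc 1 N = insert 1 (Finset.Icc 2 N) := by
        ext d
        simp only [Finset.mem_Icc, Finset.mem_insert]
        omega
      rw [hins, Finset.sum_insert (by simp [Finset.mem_Icc])]
    have e5 : (necklace (n - 1) 1) • lder (v 1) = (n : ℤ) • lder (v 1) - lder (v 1) := by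
      rw [necklace_one, hmz, sub_smul, one_smul]
    rw [e1, e2, e3, e4, e5]
    abel
  -- coefficients of lder U vanish below N - 1
  have hcoefflder : ∀ r, r + 1 < N → coeff r (lder U) = 0 := by
    intro r hr
    rw [hldU, map_sub, map_sum]
    rw [coeff_lder_one_sub ((n : ℚ) - 1) two_ne_zero G hG r]
    have hvc : ∀ k ∈ Finset.Icc 1 N, coeff r ((necklace (n - 1) k) • lder (v k))
        = (necklace (n - 1) k : ℚ) * (if 2 * k ∣ (r + 1) then -(2 * (k : ℚ)) else 0) := by
      intro k hk
      have hk1 : 1 ≤ k := (Finset.mem_Icc.mp hk).1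
      rw [← Int.cast_smul_eq_zsmul ℚ, map_smul, smul_eq_mul]
      rw [coeff_lder_one_sub 1 (by omega : 2 * k ≠ 0) (v k) (hv k hk1) r]
      congr 1
      by_cases hd : 2 * k ∣ r + 1
      · rw [if_pos hd, if_pos hd, one_pow, mul_one]
        push_cast
        ring
      · rw [if_neg hd, if_neg hd]
    rw [Finset.sum_congr rfl hvc]
    by_cases h2 : 2 ∣ r + 1
    · obtain ⟨j, hj⟩ := h2
      have hj1 : 1 ≤ j := by omega
      have hjN : j ≤ N := by omega
      rw [if_pos ⟨j, hj⟩]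
      have hstep : ∀ k ∈ Finset.Icc 1 N,
          (necklace (n - 1) k : ℚ) * (if 2 * k ∣ (r + 1) then -(2 * (k : ℚ)) else 0)
          = if k ∣ j then (necklace (n - 1) k : ℚ) * (-(2 * (k : ℚ))) else 0 := by
        intro k _
        have hiff : 2 * k ∣ (r + 1) ↔ k ∣ j := by
          rw [hj]
          exact Nat.mul_dvd_mul_iff_left (by norm_num : 0 < 2)
        by_cases hd : k ∣ j
        · rw [if_pos (hiff.mpr hd), if_pos hd]
        · rw [if_neg (fun hc => hd (hiff.mp hc)), if_neg hd, mul_zero]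
      rw [Finset.sum_congr rfl hstep, ← Finset.sum_filter]
      have hfil : (Finset.Icc 1 N).filter (· ∣ j) = j.divisors := by
        ext d
        simp only [Finset.mem_filter, Finset.mem_Icc, Nat.mem_divisors]
        constructor
        · rintro ⟨⟨h1, h2⟩, hd⟩
          exact ⟨hd, by omega⟩
        · rintro ⟨hd, _⟩
          have h1 : 1 ≤ d := Nat.pos_of_dvd_of_pos hd (by omega)
          have h2 : d ≤ j := Nat.le_of_dvd (by omega) hd
          exact ⟨⟨h1, by omega⟩, hd⟩
      rw [hfil]
      have hsum2 : ∑ d ∈ j.divisors, (necklace (n - 1) d : ℚ) * (-(2 * (d : ℚ)))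
          = -2 * ∑ d ∈ j.divisors, (d : ℚ) * (necklace (n - 1) d : ℚ) := by
        rw [Finset.mul_sum]
        apply Finset.sum_congr rfl
        intro d _
        ring
      rw [hsum2]
      have hsum3 : ∑ d ∈ j.divisors, (d : ℚ) * (necklace (n - 1) d : ℚ) = ((n : ℚ) - 1) ^ j := by
        have h := sum_mul_necklace (n - 1) hj1
        have h2 := congrArg (Int.cast : ℤ → ℚ) h
        push_cast at h2
        rw [hmq] at h2
        exact h2
      rw [hsum3]
      have hjr : (r + 1) / 2 = j := by omega
      rw [hjr]
      ring
    · rw [if_neg h2]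
      rw [Finset.sum_eq_zero, sub_zero]
      intro k _
      rw [if_neg (fun hc => h2 (dvd_trans (Dvd.intro k rfl) hc)), mul_zero]
  -- conclude
  have hUc := coeff_eq_of_lder_eq_zero U N hcU hcoefflder
  have hdiff : (R : PowerSeries ℚ) - (L : PowerSeries ℚ)
      = (L : PowerSeries ℚ) * ((U : PowerSeries ℚ) - 1) := by
    rw [hRLU, Units.val_mul]
    ring
  have hco : ∀ i, i < N → coeff i (R : PowerSeries ℚ) = coeff i (L : PowerSeries ℚ) := by
    intro i hi
    have h0 : coeff i ((L : PowerSeries ℚ) * ((U : PowerSeries ℚ) - 1)) = 0 := by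
      rw [PowerSeries.coeff_mul]
      apply Finset.sum_eq_zero
      intro x hx
      rw [Finset.HasAntidiagonal.mem_antidiagonal] at hx
      have hx2 : coeff x.2 ((U : PowerSeries ℚ) - 1) = 0 := by
        rw [map_sub, hUc x.2 (by omega), sub_self]
      rw [hx2, mul_zero]
    have h1 := congrArg (coeff i) hdiff
    rw [map_sub, h0] at h1
    linarith
  apply Polynomial.ext
  intro i
  rw [PowerSeries.coeff_trunc, PowerSeries.coeff_trunc]
  split_ifs with h
  · exact (hco i h).symm
  · rfl

/-- In `ℚ⟦q⟧`: `(1+q²)/(1-(n-1)q²) = (1-q⁴)/(1-q²)^n ⬝ ∏_{k=2}^∞ (1-q^(2k))^(-ℓ_{n-1}(k))`,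
the infinite product interpreted q-adically (`uQ (2k-1) = 1 - q^(2k)`, `uQ 1 = 1 - q²`,
`uQ 3 = 1 - q⁴`). -/
theorem flag_poincare_identity (n : ℕ) (hn : 2 ≤ n) :
    ∀ N : ℕ,
      trunc N ((psUnit (1 + X ^ 2) (by simp) *
          (psUnit (1 - C ((n : ℚ) - 1) * X ^ 2) (by simp))⁻¹ : (PowerSeries ℚ)ˣ) :
        PowerSeries ℚ) =
      trunc N ((uQ 3 * ((uQ 1)⁻¹) ^ n *
          ∏ k ∈ Finset.Icc 2 N, uQ (2 * k - 1) ^ (-(necklace (n - 1) k)) :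
            (PowerSeries ℚ)ˣ) : PowerSeries ℚ) := by
  intro N
  rcases Nat.eq_zero_or_pos N with rfl | hN
  · simp
  have hv : ∀ k, 1 ≤ k →
      (((fun k => uQ (2 * k - 1)) k : (PowerSeries ℚ)ˣ) : PowerSeries ℚ)
        = 1 - C 1 * X ^ (2 * k) := by
    intro k hk
    rw [uQ_val, map_one, one_mul]
    congr 2
    omega
  have h1 : uQ 1 = (fun k => uQ (2 * k - 1)) 1 := by norm_num
  rw [h1]
  exact main_aux N n hn hN _ _ _ (fun k => uQ (2 * k - 1)) rfl rfl (uQ_val 3) hv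
end
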